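/- Let n ≥ 2 and let C_1 ≥ D_1 ≥ C_2 ≥ D_2 ≥ ... ≥ C_{n-1} ≥ D_{n-1} be positive real numbers. Define C = Σ_{i=1}^{n-1} Π_{j=1}^{i} C_{n-j} + (Π_{m=1}^{n-1} C_m) · Σ_{i=1}^{n-1} Π_{j=1}^{i} D_j and D = Σ_{i=1}^{n-1} Π_{j=1}^{i} D_{n-j} + (Π_{m=1}^{n-1} D_m) · Σ_{i=1}^{n-1} Π_{j=1}^{i} C_j. Then C ≥ D. -/

import Mathlib

/-- Lemma `lemma-new`, first part. Let `n ≥ 2` and let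
`C 1 ≥ D 1 ≥ C 2 ≥ D 2 ≥ … ≥ C (n-1) ≥ D (n-1)` be positive reals. Define
`C = Σ_{i=1}^{n-1} Π_{j=1}^{i} C (n-j) + (Π_{m=1}^{n-1} C m) · Σ_{i=1}^{n-1} Π_{j=1}^{i} D j`
and
`D = Σ_{i=1}^{n-1} Π_{j=1}^{i} D (n-j) + (Π_{m=1}^{n-1} D m) · Σ_{i=1}^{n-1} Π_{j=1}^{i} C j`.
Then `C ≥ D`. -/
theorem subtree_lemma_new_first (n : ℕ) (hn : 2 ≤ n) (C D : ℕ → ℝ)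
    (hCpos : ∀ i ∈ Finset.Icc 1 (n - 1), 0 < C i)
    (hDpos : ∀ i ∈ Finset.Icc 1 (n - 1), 0 < D i)
    (hDleC : ∀ i ∈ Finset.Icc 1 (n - 1), D i ≤ C i)
    (hCleD : ∀ i ∈ Finset.Icc 1 (n - 2), C (i + 1) ≤ D i) :
    (∑ i ∈ Finset.Icc 1 (n - 1), ∏ j ∈ Finset.Icc 1 i, D (n - j)) +
        (∏ m ∈ Finset.Icc 1 (n - 1), D m) *
          (∑ i ∈ Finset.Icc 1 (n - 1), ∏ j ∈ Finset.Icc 1 i, C j) ≤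
      (∑ i ∈ Finset.Icc 1 (n - 1), ∏ j ∈ Finset.Icc 1 i, C (n - j)) +
        (∏ m ∈ Finset.Icc 1 (n - 1), C m) *
          (∑ i ∈ Finset.Icc 1 (n - 1), ∏ j ∈ Finset.Icc 1 i, D j) := by
  have hIcc : ∀ t : ℕ, Finset.Icc 1 t = Finset.Ioc 0 t := by
    intro t; rw [← Finset.Icc_add_one_left_eq_Ioc]; rfl
  apply add_le_add
  · apply Finset.sum_le_sum
    intro i hi
    simp only [Finset.mem_Icc] at hi
    apply Finset.prod_le_prod
    · intro j hj
      simp only [Finset.mem_Icc] at hj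
      exact le_of_lt (hDpos (n - j) (by simp only [Finset.mem_Icc]; omega))
    · intro j hj
      simp only [Finset.mem_Icc] at hj
      exact hDleC (n - j) (by simp only [Finset.mem_Icc]; omega)
  · rw [Finset.mul_sum, Finset.mul_sum]
    apply Finset.sum_le_sum
    intro i hi
    simp only [Finset.mem_Icc] at hi
    have h0i : (0 : ℕ) ≤ i := Nat.zero_le _
    have hin : i ≤ n - 1 := hi.2
    have hsplitD := Finset.prod_Ioc_consecutive D h0i hin
    have hsplitC := Finset.prod_Ioc_consecutive C h0i hin
    simp only [hIcc]
    rw [← hsplitD, ← hsplitC]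
    have hmem : ∀ j ∈ Finset.Ioc i (n - 1), j ∈ Finset.Icc 1 (n - 1) := by
      intro j hj
      simp only [Finset.mem_Ioc] at hj
      simp only [Finset.mem_Icc]; omega
    have hmem' : ∀ j ∈ Finset.Ioc 0 i, j ∈ Finset.Icc 1 (n - 1) := by
      intro j hj
      simp only [Finset.mem_Ioc] at hj
      simp only [Finset.mem_Icc]; omega
    have hDpos' : (0:ℝ) < ∏ j ∈ Finset.Ioc 0 i, D j :=
      Finset.prod_pos fun j hj => hDpos j (hmem' j hj)
    have hCpos' : (0:ℝ) < ∏ j ∈ Finset.Ioc 0 i, C j :=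
      Finset.prod_pos fun j hj => hCpos j (hmem' j hj)
    have htail : (∏ j ∈ Finset.Ioc i (n - 1), D j) ≤ ∏ j ∈ Finset.Ioc i (n - 1), C j := by
      apply Finset.prod_le_prod
      · intro j hj; exact le_of_lt (hDpos j (hmem j hj))
      · intro j hj; exact hDleC j (hmem j hj)
    have htailpos : (0:ℝ) ≤ ∏ j ∈ Finset.Ioc i (n - 1), D j :=
      le_of_lt (Finset.prod_pos fun j hj => hDpos j (hmem j hj))
    calc (∏ j ∈ Finset.Ioc 0 i, D j) * (∏ j ∈ Finset.Ioc i (n-1), D j) * ∏ j ∈ Finset.Ioc 0 i, C j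
        ≤ (∏ j ∈ Finset.Ioc 0 i, D j) * (∏ j ∈ Finset.Ioc i (n-1), C j) * ∏ j ∈ Finset.Ioc 0 i, C j := by
          apply mul_le_mul_of_nonneg_right _ (le_of_lt hCpos')
          exact mul_le_mul_of_nonneg_left htail (le_of_lt hDpos')
      _ = (∏ j ∈ Finset.Ioc 0 i, C j) * (∏ j ∈ Finset.Ioc i (n-1), C j) * ∏ j ∈ Finset.Ioc 0 i, D j := by
          ring
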